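/- In a jointly non-causal model, for any sequences w, x, y, z ∈ {0,1}^T with x ≡_e y, and any fixed sequence z, we have P(A = z, B = x) = P(A = z, B = y): joint partial exchangeability in the B-coordinate holds when A is held fixed. -/
import Mathlib

open MeasureTheory

/-- `Fcnt n i j A` counts transitions from state `i` to state `j` in the
binary sequence `A` of length `n+1`. -/
def Fcnt (n : ℕ) (i j : Bool) (A : Fin (n+1) → Bool) : ℕ :=
  (Finset.univ.filter fun t : Fin n => A t.castSucc = i ∧ A t.succ = j).card

/-- Stationary two-state Markov chain probability of a binary sequence. -/
def qseq (n : ℕ) (a0 ap am : ℝ) (A : Fin (n+1) → Bool) : ℝ :=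
  (if A 0 then 1 - a0 else a0) *
    ap ^ Fcnt n false true A * am ^ Fcnt n true false A *
    (1 - ap) ^ Fcnt n false false A * (1 - am) ^ Fcnt n true true A

/-- In a non-causal model (a mixture over hidden attributes of products of
independent stationary Markov chains for `A` and `B`), joint partial
exchangeability holds in the `B`-coordinate with `A` held fixed: if `x ≡ₑ y`
then `P(A = z, B = x) = P(A = z, B = y)`. -/
theorem noncausal_joint_partial_exchangeability
    (n : ℕ) (Θ : Type*) [MeasurableSpace Θ] (μ : Measure Θ) [IsProbabilityMeasure μ]
    (aA0 aAp aAm aB0 aBp aBm : Θ → ℝ)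
    (hbox : ∀ᵐ θ ∂μ, aA0 θ ∈ Set.Icc (0:ℝ) 1 ∧ aAp θ ∈ Set.Icc (0:ℝ) 1 ∧
      aAm θ ∈ Set.Icc (0:ℝ) 1 ∧ aB0 θ ∈ Set.Icc (0:ℝ) 1 ∧
      aBp θ ∈ Set.Icc (0:ℝ) 1 ∧ aBm θ ∈ Set.Icc (0:ℝ) 1)
    (P : (Fin (n+1) → Bool) → (Fin (n+1) → Bool) → ℝ)
    (hP : ∀ A B, P A B =
      ∫ θ, qseq n (aA0 θ) (aAp θ) (aAm θ) A * qseq n (aB0 θ) (aBp θ) (aBm θ) B ∂μ)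
    (x y z : Fin (n+1) → Bool) (hinit : x 0 = y 0)
    (hF : ∀ i j : Bool, Fcnt n i j x = Fcnt n i j y) :
    P z x = P z y := by
  have hq : ∀ a0 ap am : ℝ, qseq n a0 ap am x = qseq n a0 ap am y := by
    intro a0 ap am
    simp [qseq, hinit, hF]
  rw [hP z x, hP z y]
  simp only [hq]
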